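/- Let n ≥ 3 be an integer, let ρ : (0,∞) → (0,∞) be continuously differentiable, let R > 1, and let H : [1,R] → (0,∞) be twice continuously differentiable with H'(t) > 0 for all t, such that 𝓛[H] is constant on [1,R]. Set η(t) = t·H'(t)/H(t). Then at every t ∈ (1,R) with η(t) ≠ 1 one has n + n·t·(1 + η(t)²)·η'(t) / ( (η(t)² − 1)·(n − 1 + η(t)²) ) + H(t)·ρ'(H(t))/ρ(H(t)) = 0. In particular, if ρ(s) = s^ν for a real ν, then (1 + η(t)²)·η'(t) / ( (1 − η(t)²)·(n − 1 + η(t)²) ) = (n + ν)/(n·t) at every such t. -/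

import Mathlib

/-- Let `H` be a positive `C²` function on `[1,R]` with `H' > 0` such
that `𝓛[H]` is constant, and let `η(t) = tH'(t)/H(t)`. Then at every interior point with
`η(t) ≠ 1`, `n + n t (1 + η²) η' / ((η² - 1)(n - 1 + η²)) + H ρ'(H)/ρ(H) = 0`; in
particular for `ρ(s) = s^ν`, `(1 + η²) η' / ((1 - η²)(n - 1 + η²)) = (n + ν)/(n t)`. -/
theorem stmt19 (n : ℕ) (hn : 3 ≤ n) (ρ ρ' : ℝ → ℝ)
    (hρ : ∀ s ∈ Set.Ioi (0:ℝ), HasDerivAt ρ (ρ' s) s)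
    (hρ'cont : ContinuousOn ρ' (Set.Ioi 0))
    (hρpos : ∀ s ∈ Set.Ioi (0:ℝ), 0 < ρ s)
    (R : ℝ) (hR : 1 < R) (H H' H'' : ℝ → ℝ)
    (hH : ∀ t ∈ Set.Icc 1 R, HasDerivWithinAt H (H' t) (Set.Icc 1 R) t)
    (hH' : ∀ t ∈ Set.Icc 1 R, HasDerivWithinAt H' (H'' t) (Set.Icc 1 R) t)
    (hH'cont : ContinuousOn H' (Set.Icc 1 R))
    (hH''cont : ContinuousOn H'' (Set.Icc 1 R))
    (hHpos : ∀ t ∈ Set.Icc 1 R, 0 < H t)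
    (hH'pos : ∀ t ∈ Set.Icc 1 R, 0 < H' t)
    (c : ℝ)
    (hc : ∀ t ∈ Set.Icc 1 R,
      ρ (H t) * ((H t) ^ 2 - t ^ 2 * H' t ^ 2) *
        ((H t) ^ 2 + t ^ 2 * H' t ^ 2 / ((n : ℝ) - 1)) ^ (((n : ℝ) - 2) / 2) = c) :
    ∀ t ∈ Set.Ioo 1 R, t * H' t / H t ≠ 1 →
      ((n : ℝ) + (n : ℝ) * t * (1 + (t * H' t / H t) ^ 2)
            * deriv (fun s => s * H' s / H s) t
          / (((t * H' t / H t) ^ 2 - 1) * ((n : ℝ) - 1 + (t * H' t / H t) ^ 2))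
        + H t * ρ' (H t) / ρ (H t) = 0) ∧
      ∀ ν : ℝ, (∀ s ∈ Set.Ioi (0:ℝ), ρ s = s ^ ν) →
        (1 + (t * H' t / H t) ^ 2) * deriv (fun s => s * H' s / H s) t
            / ((1 - (t * H' t / H t) ^ 2) * ((n : ℝ) - 1 + (t * H' t / H t) ^ 2))
          = ((n : ℝ) + ν) / ((n : ℝ) * t) := by
  intro t ht hη1
  obtain ⟨ht1, htR⟩ := ht
  have htmem : t ∈ Set.Icc 1 R := ⟨le_of_lt ht1, le_of_lt htR⟩
  have ht0 : (0:ℝ) < t := by linarith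
  have hnhds : Set.Icc (1:ℝ) R ∈ nhds t := Icc_mem_nhds ht1 htR
  have hnR : (3:ℝ) ≤ (n:ℝ) := by exact_mod_cast hn
  have hn1 : ((n:ℝ) - 1) ≠ 0 := by linarith
  have ha : 0 < H t := hHpos t htmem
  have hb : 0 < H' t := hH'pos t htmem
  have hHa : HasDerivAt H (H' t) t := (hH t htmem).hasDerivAt hnhds
  have hH'a : HasDerivAt H' (H'' t) t := (hH' t htmem).hasDerivAt hnhds
  have hρa : HasDerivAt ρ (ρ' (H t)) (H t) := hρ _ ha
  have hρH : HasDerivAt (fun s => ρ (H s)) (ρ' (H t) * H' t) t := hρa.comp t hHa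
  have hv : 0 < (H t) ^ 2 + t ^ 2 * H' t ^ 2 / ((n:ℝ) - 1) := by
    have hn1p : (0:ℝ) < (n:ℝ) - 1 := by linarith
    positivity
  -- u nonzero
  have hη0 : 0 < t * H' t / H t := by positivity
  have hη2 : (t * H' t / H t) ^ 2 - 1 ≠ 0 := by
    intro h
    have h' : (t * H' t / H t - 1) * (t * H' t / H t + 1) = 0 := by linear_combination h
    rcases mul_eq_zero.mp h' with h | h
    · exact hη1 (by linarith)
    · linarith
  have hu : (H t) ^ 2 - t ^ 2 * H' t ^ 2 ≠ 0 := by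
    intro h
    apply hη2
    field_simp
    linear_combination -h
  -- derivative of U
  have hU : HasDerivAt (fun s => H s ^ 2 - s ^ 2 * H' s ^ 2)
      (2 * H t * H' t - (2 * t * H' t ^ 2 + t ^ 2 * (2 * H' t * H'' t))) t := by
    have h1 := hHa.pow 2
    have h2 := (hasDerivAt_pow 2 t).mul (hH'a.pow 2)
    refine (h1.sub h2).congr_deriv ?_
    push_cast [Pi.pow_apply]
    ring
  have hV : HasDerivAt (fun s => H s ^ 2 + s ^ 2 * H' s ^ 2 / ((n:ℝ) - 1))
      (2 * H t * H' t + (2 * t * H' t ^ 2 + t ^ 2 * (2 * H' t * H'' t)) / ((n:ℝ) - 1)) t := by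
    have h1 := hHa.pow 2
    have h2 := ((hasDerivAt_pow 2 t).mul (hH'a.pow 2)).div_const ((n:ℝ) - 1)
    refine (h1.add h2).congr_deriv ?_
    push_cast [Pi.pow_apply]
    ring
  have hVp := hV.rpow_const (p := ((n:ℝ) - 2) / 2) (Or.inl hv.ne')
  have hL := (hρH.mul hU).mul hVp
  have heq : (fun s => ρ (H s) * (H s ^ 2 - s ^ 2 * H' s ^ 2) *
      (H s ^ 2 + s ^ 2 * H' s ^ 2 / ((n:ℝ) - 1)) ^ (((n:ℝ) - 2) / 2)) =ᶠ[nhds t]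
      (fun _ => c) := by
    filter_upwards [hnhds] with s hs
    exact hc s hs
  have hD0 := (hL.congr_of_eventuallyEq heq.symm).unique (hasDerivAt_const t c)
  simp only [Pi.mul_apply] at hD0
  -- peel off the rpow factor
  set A := H t
  set B := H' t
  set D := H'' t
  set r := ρ (H t)
  set r' := ρ' (H t)
  set v := A ^ 2 + t ^ 2 * B ^ 2 / ((n:ℝ) - 1) with hv_def
  have hw : v ^ (((n:ℝ) - 2) / 2) = v ^ (((n:ℝ) - 2) / 2 - 1) * v := by
    rw [← Real.rpow_add_one hv.ne', sub_add_cancel]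
  rw [hw] at hD0
  have hvp : v ^ (((n:ℝ) - 2) / 2 - 1) ≠ 0 := (Real.rpow_pos_of_pos hv _).ne'
  have hkey : (r' * B * (A ^ 2 - t ^ 2 * B ^ 2)
        + r * (2 * A * B - (2 * t * B ^ 2 + t ^ 2 * (2 * B * D)))) * v
      + r * (A ^ 2 - t ^ 2 * B ^ 2) *
        ((2 * A * B + (2 * t * B ^ 2 + t ^ 2 * (2 * B * D)) / ((n:ℝ) - 1)) * (((n:ℝ) - 2) / 2)) = 0 := by
    have h2 : v ^ (((n:ℝ) - 2) / 2 - 1) *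
        ((r' * B * (A ^ 2 - t ^ 2 * B ^ 2)
          + r * (2 * A * B - (2 * t * B ^ 2 + t ^ 2 * (2 * B * D)))) * v
        + r * (A ^ 2 - t ^ 2 * B ^ 2) *
          ((2 * A * B + (2 * t * B ^ 2 + t ^ 2 * (2 * B * D)) / ((n:ℝ) - 1)) * (((n:ℝ) - 2) / 2))) = 0 := by
      linear_combination hD0
    rcases mul_eq_zero.mp h2 with h | h
    · exact absurd h hvp
    · exact h
  -- derivative of eta
  have hE : HasDerivAt (fun s => s * H' s / H s)
      (((1 * B + t * D) * A - t * B * B) / A ^ 2) t :=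
    ((hasDerivAt_id t).mul hH'a).div hHa ha.ne'
  have hder : deriv (fun s => s * H' s / H s) t = ((1 * B + t * D) * A - t * B * B) / A ^ 2 :=
    hE.deriv
  have hr : 0 < r := hρpos _ ha
  have hnv : ((n:ℝ) - 1) + (t * B / A) ^ 2 ≠ 0 :=
    ne_of_gt (by nlinarith [sq_nonneg (t * B / A)])
  have hdenom : (((t * B / A) ^ 2 - 1) * ((n : ℝ) - 1 + (t * B / A) ^ 2)) ≠ 0 :=
    mul_ne_zero hη2 hnv
  have hmain2 : (n : ℝ) * t * (1 + (t * B / A) ^ 2) * (((1 * B + t * D) * A - t * B * B) / A ^ 2)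
      / (((t * B / A) ^ 2 - 1) * ((n : ℝ) - 1 + (t * B / A) ^ 2)) = -((n:ℝ) + A * r' / r) := by
    rw [div_eq_iff hdenom]
    rw [hv_def] at hkey
    field_simp at hkey ⊢
    have hB2 : (2 * B * ((n:ℝ) - 1)) ≠ 0 := by 
      have : (0:ℝ) < (n:ℝ) - 1 := by linarith
      positivity
    have hQ : r' * (A ^ 4 * ((n:ℝ) - 1) - ((n:ℝ) - 2) * A ^ 2 * t ^ 2 * B ^ 2 - t ^ 4 * B ^ 4)
        + (- (n:ℝ) * A ^ 2 * t ^ 2 * D * r + (n:ℝ) * ((n:ℝ) - 1) * A ^ 3 * r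
          - (n:ℝ) * A ^ 2 * t * B * r - (n:ℝ) * ((n:ℝ) - 3) * A * B ^ 2 * t ^ 2 * r
          - (n:ℝ) * B ^ 2 * t ^ 4 * D * r - (n:ℝ) * B ^ 3 * t ^ 3 * r) = 0 := by
      apply mul_left_cancel₀ hB2
      rw [mul_zero]
      linear_combination 2 * ((n:ℝ) - 1) * hkey
    linear_combination (-A) * hQ
  have main : (n : ℝ) + (n : ℝ) * t * (1 + (t * B / A) ^ 2)
        * deriv (fun s => s * H' s / H s) t
      / (((t * B / A) ^ 2 - 1) * ((n : ℝ) - 1 + (t * B / A) ^ 2))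
      + A * r' / r = 0 := by
    rw [hder, hmain2]
    ring
  refine ⟨main, ?_⟩
  intro ν hν
  have hx : HasDerivAt (fun s : ℝ => s ^ ν) (ν * A ^ (ν - 1)) A :=
    Real.hasDerivAt_rpow_const (Or.inl ha.ne')
  have hρν : r' = ν * A ^ (ν - 1) := by
    have heq2 : (fun s : ℝ => s ^ ν) =ᶠ[nhds A] ρ := by
      filter_upwards [Ioi_mem_nhds ha] with s hs
      exact (hν s hs).symm
    exact ((hx.congr_of_eventuallyEq heq2.symm).unique hρa).symm
  have hrA : r = A ^ ν := hν _ ha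
  have hAν : A ^ (ν - 1) * A = A ^ ν := by
    rw [← Real.rpow_add_one ha.ne', sub_add_cancel]
  have hfrac : A * r' / r = ν := by
    rw [hρν, hrA]
    rw [div_eq_iff (by positivity : A ^ ν ≠ 0)]
    linear_combination ν * hAν
  rw [hfrac] at main
  rw [hder] at main ⊢
  have hn0 : (n:ℝ) ≠ 0 := by linarith
  have h1mη : 1 - (t * B / A) ^ 2 ≠ 0 := by
    intro h; exact hη2 (by linarith)
  have hnt : (n:ℝ) * t ≠ 0 := by positivity
  have h1 : (((t * B / A) ^ 2 - 1) * ((n:ℝ) - 1 + (t * B / A) ^ 2))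
      = -((1 - (t * B / A) ^ 2) * ((n:ℝ) - 1 + (t * B / A) ^ 2)) := by ring
  rw [h1, div_neg] at main
  rw [eq_div_iff hnt]
  linear_combination -main
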